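/- Suppose G is an r-graph, x is a vertex of G, and 1 ≤ s ≤ r−1. Then rk M_s^r(G) ≥ rk M_s^r(G − x) + rk M_{s−1}^{r−1}(G/x), where ranks are over the rationals. -/

import Mathlib

open Matrix Module

/-- Rank is invariant under reindexing by equivalences, rectangular version. -/
lemma rank_submatrix_equiv {m n m' n' : Type*} [Fintype n] [Fintype n'] [Fintype m] [Fintype m']
    (A : Matrix m n ℚ) (e₁ : m' ≃ m) (e₂ : n' ≃ n) :
    (A.submatrix e₁ e₂).rank = A.rank := by
  rw [Matrix.rank, Matrix.rank, Matrix.mulVecLin_submatrix, LinearMap.range_comp,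
    LinearMap.range_comp,
    show LinearMap.funLeft ℚ ℚ e₂.symm = (LinearEquiv.funCongrLeft ℚ ℚ e₂.symm : _) from rfl,
    LinearEquiv.range, Submodule.map_top,
    show LinearMap.funLeft ℚ ℚ (e₁ : m' → m) = (LinearEquiv.funCongrLeft ℚ ℚ e₁ : _) from rfl,
    LinearEquiv.finrank_map_eq]

/-- The rank of a block upper-triangular matrix is at least the sum of the ranks of the
diagonal blocks. -/
lemma rank_fromBlocks_ge {m₁ m₂ n₁ n₂ : Type*} [Fintype m₁] [Fintype m₂] [Fintype n₁]
    [Fintype n₂] (B : Matrix m₁ n₁ ℚ) (C : Matrix m₁ n₂ ℚ) (D : Matrix m₂ n₂ ℚ) :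
    B.rank + D.rank ≤ (Matrix.fromBlocks B C 0 D).rank := by
  set M : Matrix (m₁ ⊕ m₂) (n₁ ⊕ n₂) ℚ := Matrix.fromBlocks B C 0 D with hM
  set f := M.mulVecLin with hf
  set V : Submodule ℚ ((m₁ ⊕ m₂) → ℚ) := LinearMap.range f with hV
  set π : ((m₁ ⊕ m₂) → ℚ) →ₗ[ℚ] (m₂ → ℚ) := LinearMap.funLeft ℚ ℚ Sum.inr with hπ
  set π₁ : ((m₁ ⊕ m₂) → ℚ) →ₗ[ℚ] (m₁ → ℚ) := LinearMap.funLeft ℚ ℚ Sum.inl with hπ₁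
  have hrank : M.rank = finrank ℚ V := rfl
  have key := LinearMap.finrank_range_add_finrank_ker (π.domRestrict V)
  -- rank D ≤ finrank (range (π.domRestrict V))
  have hD : D.rank ≤ finrank ℚ (LinearMap.range (π.domRestrict V)) := by
    have hle : LinearMap.range D.mulVecLin ≤ LinearMap.range (π.domRestrict V) := by
      rintro - ⟨y, rfl⟩
      refine ⟨⟨M *ᵥ Sum.elim 0 y, ⟨Sum.elim 0 y, rfl⟩⟩, ?_⟩
      funext i
      simp [π, LinearMap.funLeft, hM, Matrix.fromBlocks_mulVec, Matrix.mulVec_zero,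
        Matrix.zero_mulVec]
    exact Submodule.finrank_mono hle
  -- rank B ≤ finrank (ker (π.domRestrict V))
  have hB : B.rank ≤ finrank ℚ (LinearMap.ker (π.domRestrict V)) := by
    -- the extension-by-zero map
    set ext : (n₁ → ℚ) →ₗ[ℚ] ((n₁ ⊕ n₂) → ℚ) :=
      { toFun := fun v => Sum.elim v 0
        map_add' := by intro a b; funext i; cases i <;> simp
        map_smul' := by intro c a; funext i; cases i <;> simp } with hext
    set φ : (n₁ → ℚ) →ₗ[ℚ] ((m₁ ⊕ m₂) → ℚ) := f.comp ext with hφ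
    have hφV : ∀ v, φ v ∈ V := fun v => ⟨ext v, rfl⟩
    set ψ : (n₁ → ℚ) →ₗ[ℚ] V := LinearMap.codRestrict V φ hφV with hψ
    have hker : LinearMap.range ψ ≤ LinearMap.ker (π.domRestrict V) := by
      rintro - ⟨v, rfl⟩
      simp only [LinearMap.mem_ker]
      funext i
      simp [π, ψ, φ, f, LinearMap.funLeft, hM, ext, Matrix.fromBlocks_mulVec,
        Matrix.mulVec_zero, Matrix.zero_mulVec, Matrix.mulVec]
    have hBφ : B.mulVecLin = π₁.comp φ := by
      ext v i
      simp [π₁, φ, f, LinearMap.funLeft, hM, ext, Matrix.fromBlocks_mulVec,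
        Matrix.mulVec_zero]
    have h1 : B.rank = finrank ℚ (Submodule.map π₁ (LinearMap.range φ)) := by
      rw [Matrix.rank, hBφ, LinearMap.range_comp]
    have h2 : LinearMap.range φ = Submodule.map V.subtype (LinearMap.range ψ) := by
      rw [← LinearMap.range_comp]
      rfl
    calc B.rank = finrank ℚ (Submodule.map π₁ (LinearMap.range φ)) := h1
      _ = finrank ℚ (Submodule.map (π₁.comp V.subtype) (LinearMap.range ψ)) := by
          rw [h2, Submodule.map_comp]
      _ ≤ finrank ℚ (LinearMap.range ψ) := Submodule.finrank_map_le _ _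
      _ ≤ finrank ℚ (LinearMap.ker (π.domRestrict V)) := Submodule.finrank_mono hker
  calc B.rank + D.rank
      ≤ finrank ℚ (LinearMap.ker (π.domRestrict V)) +
        finrank ℚ (LinearMap.range (π.domRestrict V)) := Nat.add_le_add hB hD
    _ = M.rank := by rw [hrank, ← key]; ring

/-- Inclusion matrix of the hypergraph with edge set `E` on `Fin n`, with rows the edges of
`E` and columns the `s`-subsets of `Fin n` satisfying the predicate `P`
(used to restrict the vertex set), entry `1` iff containment. -/
def incMat (n s : ℕ) (E : Finset (Finset (Fin n))) (P : Finset (Fin n) → Prop)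
    [DecidablePred P] :
    Matrix {e : Finset (Fin n) // e ∈ E} {S : Finset (Fin n) // S.card = s ∧ P S} ℚ :=
  fun e S => if (S : Finset (Fin n)) ⊆ (e : Finset (Fin n)) then 1 else 0

/-- Splitting the edges according to containing `x` or not. -/
def splitRow (n : ℕ) (E : Finset (Finset (Fin n))) (x : Fin n) :
    {e : Finset (Fin n) // e ∈ E} ≃
      {e : Finset (Fin n) // e ∈ E.filter (fun e => x ∈ e)} ⊕
      {e : Finset (Fin n) // e ∈ E.filter (fun e => x ∉ e)} where
  toFun e := if h : x ∈ e.1 then .inl ⟨e.1, Finset.mem_filter.2 ⟨e.2, h⟩⟩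
    else .inr ⟨e.1, Finset.mem_filter.2 ⟨e.2, h⟩⟩
  invFun := Sum.elim (fun a => ⟨a.1, (Finset.mem_filter.1 a.2).1⟩)
    (fun a => ⟨a.1, (Finset.mem_filter.1 a.2).1⟩)
  left_inv e := by by_cases h : x ∈ e.1 <;> simp [h]
  right_inv a := by
    rcases a with a | a
    · have h := (Finset.mem_filter.1 a.2).2; simp [h]
    · have h := (Finset.mem_filter.1 a.2).2; simp [h]

/-- Splitting the `s`-sets according to containing `x` or not. -/
def splitCol (n s : ℕ) (x : Fin n) :
    {S : Finset (Fin n) // S.card = s ∧ True} ≃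
      {S : Finset (Fin n) // S.card = s ∧ x ∈ S} ⊕
      {S : Finset (Fin n) // S.card = s ∧ x ∉ S} where
  toFun S := if h : x ∈ S.1 then .inl ⟨S.1, S.2.1, h⟩ else .inr ⟨S.1, S.2.1, h⟩
  invFun := Sum.elim (fun a => ⟨a.1, a.2.1, trivial⟩) (fun a => ⟨a.1, a.2.1, trivial⟩)
  left_inv S := by by_cases h : x ∈ S.1 <;> simp [h]
  right_inv a := by
    rcases a with a | a
    · have h := a.2.2; simp [h]
    · have h := a.2.2; simp [h]


/-- Edges of the link/contraction correspond to edges containing `x`. -/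
def eraseEquiv (n : ℕ) (E : Finset (Finset (Fin n))) (x : Fin n) :
    {e : Finset (Fin n) // e ∈ (E.filter (fun e => x ∈ e)).image (fun e => e.erase x)} ≃
      {e : Finset (Fin n) // e ∈ E.filter (fun e => x ∈ e)} where
  toFun e' := ⟨insert x e'.1, by
    obtain ⟨a, ha, hae⟩ := Finset.mem_image.1 e'.2
    rw [← hae, Finset.insert_erase (Finset.mem_filter.1 ha).2]
    exact ha⟩
  invFun a := ⟨a.1.erase x, Finset.mem_image_of_mem _ a.2⟩
  left_inv e' := Subtype.ext (by
    obtain ⟨a, ha, hae⟩ := Finset.mem_image.1 e'.2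
    have hx : x ∉ e'.1 := by rw [← hae]; exact Finset.notMem_erase x a
    simp [Finset.erase_insert hx])
  right_inv a := Subtype.ext (by simp [Finset.insert_erase (Finset.mem_filter.1 a.2).2])

/-- `(s-1)`-sets avoiding `x` correspond to `s`-sets containing `x`. -/
def insertEquiv (n s : ℕ) (x : Fin n) (hs1 : 1 ≤ s) :
    {S : Finset (Fin n) // S.card = s - 1 ∧ x ∉ S} ≃
      {S : Finset (Fin n) // S.card = s ∧ x ∈ S} where
  toFun S' := ⟨insert x S'.1, by
    rw [Finset.card_insert_of_notMem S'.2.2, S'.2.1]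
    exact ⟨by omega, Finset.mem_insert_self x _⟩⟩
  invFun T := ⟨T.1.erase x, by
    rw [Finset.card_erase_of_mem T.2.2, T.2.1]
    exact ⟨rfl, Finset.notMem_erase x _⟩⟩
  left_inv S' := Subtype.ext (by simp [Finset.erase_insert S'.2.2])
  right_inv T := Subtype.ext (by simp [Finset.insert_erase T.2.2])

/-- `rk M_s^r(G) ≥ rk M_s^r(G − x) + rk M_{s−1}^{r−1}(G/x)`. -/
theorem stmt4 (n r s : ℕ) (hs1 : 1 ≤ s) (hs2 : s ≤ r - 1)
    (E : Finset (Finset (Fin n))) (hE : ∀ e ∈ E, e.card = r) (x : Fin n) :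
    (incMat n s E (fun _ => True)).rank ≥
      (incMat n s (E.filter (fun e => x ∉ e)) (fun S => x ∉ S)).rank +
      (incMat n (s - 1) ((E.filter (fun e => x ∈ e)).image (fun e => e.erase x))
        (fun S => x ∉ S)).rank := by
  -- block matrices
  set B0 : Matrix {e : Finset (Fin n) // e ∈ E.filter (fun e => x ∈ e)}
      {S : Finset (Fin n) // S.card = s ∧ x ∈ S} ℚ :=
    fun e S => if (S : Finset (Fin n)) ⊆ (e : Finset (Fin n)) then 1 else 0 with hB0
  set C0 : Matrix {e : Finset (Fin n) // e ∈ E.filter (fun e => x ∈ e)}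
      {S : Finset (Fin n) // S.card = s ∧ x ∉ S} ℚ :=
    fun e S => if (S : Finset (Fin n)) ⊆ (e : Finset (Fin n)) then 1 else 0 with hC0
  set D0 := incMat n s (E.filter (fun e => x ∉ e)) (fun S => x ∉ S) with hD0
  -- the big matrix is a reindexing of the block matrix
  have hsplit : incMat n s E (fun _ => True) =
      (Matrix.fromBlocks B0 C0 0 D0).submatrix (splitRow n E x) (splitCol n s x) := by
    ext e S
    by_cases he : x ∈ e.1 <;> by_cases hS : x ∈ S.1
    · simp [splitRow, splitCol, he, hS, hB0, incMat, Matrix.fromBlocks_apply₁₁]; rfl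
    · simp [splitRow, splitCol, he, hS, hC0, incMat, Matrix.fromBlocks_apply₁₂]; rfl
    · have hne : ¬ ((S : Finset (Fin n)) ⊆ (e : Finset (Fin n))) := fun h => he (h hS)
      simp [splitRow, splitCol, he, hS, incMat, hne]
    · simp [splitRow, splitCol, he, hS, hD0, incMat]
  have hrankA : (incMat n s E (fun _ => True)).rank = (Matrix.fromBlocks B0 C0 0 D0).rank := by
    rw [hsplit, rank_submatrix_equiv]
  -- the contracted matrix has the same rank as B0
  have hBeq : incMat n (s - 1) ((E.filter (fun e => x ∈ e)).image (fun e => e.erase x))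
      (fun S => x ∉ S) = B0.submatrix (eraseEquiv n E x) (insertEquiv n s x hs1) := by
    ext e' S'
    have hxe : x ∉ e'.1 := by
      obtain ⟨a, ha, hae⟩ := Finset.mem_image.1 e'.2
      rw [← hae]; exact Finset.notMem_erase x a
    have hiff : insert x S'.1 ⊆ insert x e'.1 ↔ S'.1 ⊆ e'.1 := by
      constructor
      · intro h a ha
        rcases Finset.mem_insert.1 (h (Finset.mem_insert_of_mem ha)) with rfl | h2
        · exact absurd ha S'.2.2
        · exact h2
      · exact Finset.insert_subset_insert x
    simp only [Matrix.submatrix_apply, incMat, hB0, eraseEquiv, insertEquiv, Equiv.coe_fn_mk]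
    exact if_congr hiff.symm rfl rfl
  have hrankB : (incMat n (s - 1) ((E.filter (fun e => x ∈ e)).image (fun e => e.erase x))
      (fun S => x ∉ S)).rank = B0.rank := by
    rw [hBeq, rank_submatrix_equiv]
  rw [ge_iff_le, hrankA, hrankB, add_comm]
  exact rank_fromBlocks_ge B0 C0 D0
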